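/- Let n, m ∈ ℕ, let a = (a_1, ..., a_n) : I → ℝ^n be an (m−1)-times continuously differentiable function, and let f : I → ℝ^n be a fundamental system of solutions of y^{(n)} = a_1 y^{(n-1)} + ... + a_n y. Define X_a := (a | e_1 | ... | e_{n-1}). Then for every d ∈ {0, ..., m−1} and j ∈ {0, ..., n−1}, one has on I: W_f^{(n+d, n−1, ..., j+1, j−1, ..., 1, 0)} = (−1)^{n−j−1} · W_f · ⟨ B_{d+1}(X_a, X_a', ..., X_a^{(d)}) e_1, e_{n−j} ⟩, where the multi-index (n+d, n−1, ..., j+1, j−1, ..., 1, 0) consists of n+d followed by the integers n−1 down to 0 with j omitted. -/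

import Mathlib

open Matrix

/-- Noncommutative complete Bell polynomials: `B_0 = I_n`,
`B_{m+1}(X_1,…,X_{m+1}) = ∑_{j=0}^m C(m,j) B_j(X_1,…,X_j) X_{m+1-j}`.
Here `X : Fin m → _` with `X i` playing the role of `X_{i+1}`. -/
noncomputable def Bell {n : ℕ} :
    (m : ℕ) → (Fin m → Matrix (Fin n) (Fin n) ℝ) → Matrix (Fin n) (Fin n) ℝ
  | 0, _ => 1
  | m + 1, X => ∑ j : Fin (m + 1),
      (Nat.choose m (j : ℕ) : ℝ) •
        (Bell (j : ℕ) (fun i : Fin (j : ℕ) => X (Fin.castLE (by omega) i)) *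
          X ⟨m - (j : ℕ), by omega⟩)

/-- Entrywise `k`-th derivative (within `I`) of a matrix-valued function. -/
noncomputable def matD {n : ℕ} (I : Set ℝ) (X : ℝ → Matrix (Fin n) (Fin n) ℝ) (k : ℕ)
    (x : ℝ) : Matrix (Fin n) (Fin n) ℝ :=
  Matrix.of fun p q => iteratedDerivWithin k (fun t => X t p q) I x

/-- `B_j(X, X', …, X^{(j-1)})` evaluated at `x` (derivatives within `I`). -/
noncomputable def BellD {n : ℕ} (I : Set ℝ) (X : ℝ → Matrix (Fin n) (Fin n) ℝ) (j : ℕ)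
    (x : ℝ) : Matrix (Fin n) (Fin n) ℝ :=
  Bell j (fun i : Fin j => matD I X (i : ℕ) x)

/-- Generalized Wronskian `W_f^k = det(f^{(k_1)} | … | f^{(k_n)})` (derivatives within `I`). -/
noncomputable def genW {n : ℕ} (I : Set ℝ) (f : ℝ → Fin n → ℝ) (k : Fin n → ℕ) (x : ℝ) : ℝ :=
  Matrix.det (Matrix.of fun p q => iteratedDerivWithin (k q) (fun t => f t p) I x)

/-- The multi-index `(n-1, n-2, …, 1, 0)` of the ordinary Wronskian. -/
def wIdx (n : ℕ) : Fin n → ℕ := fun q => n - 1 - (q : ℕ)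

/-- The multi-index `(n+d, n-1, …, j+1, j-1, …, 1, 0)`. -/
def dIdx (n d j : ℕ) : Fin n → ℕ :=
  fun q => if (q : ℕ) = 0 then n + d
    else if j < n - (q : ℕ) then n - (q : ℕ) else n - (q : ℕ) - 1

/-- `Φ_f^{[j]} = (-1)^{n-j-1} W_f^{(n,n-1,…,j+1,j-1,…,0)} / W_f`. -/
noncomputable def Phi {n : ℕ} (I : Set ℝ) (f : ℝ → Fin n → ℝ) (j : ℕ) (x : ℝ) : ℝ :=
  (-1 : ℝ) ^ (n - j - 1) * genW I f (dIdx n 0 j) x / genW I f (wIdx n) x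

/-- The `1`-indexed standard basis vector `e_i` of `ℝ^n`. -/
def stdB (n i : ℕ) : Fin n → ℝ := fun p => if (p : ℕ) + 1 = i then 1 else 0

/-- The matrix `X_a = (a | e_1 | … | e_{n-1})`. -/
def colMat {n : ℕ} (a : ℝ → Fin n → ℝ) (x : ℝ) : Matrix (Fin n) (Fin n) ℝ :=
  Matrix.of fun p q =>
    if (q : ℕ) = 0 then a x p else if (p : ℕ) + 1 = (q : ℕ) then 1 else 0

/-- The matrix `Y_f = (f^{(n-1)} | … | f' | f)` (derivatives within `I`). -/
noncomputable def Yfun {n : ℕ} (I : Set ℝ) (f : ℝ → Fin n → ℝ) (x : ℝ) :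
    Matrix (Fin n) (Fin n) ℝ :=
  Matrix.of fun p q => iteratedDerivWithin (n - 1 - (q : ℕ)) (fun t => f t p) I x

/-- The `1`-indexed component `a_i` of `a : I → ℝ^n`, with `a_i := 0` for `i > n`. -/
noncomputable def aExt {n : ℕ} (a : ℝ → Fin n → ℝ) (i : ℕ) : ℝ → ℝ :=
  fun t => if h : i - 1 < n then a t ⟨i - 1, h⟩ else 0

/-- `y` is an `n`-times differentiable (on `I`) solution of
`y^{(n)} = a_1 y^{(n-1)} + ⋯ + a_n y`, where `a i` is `a_{i+1}`. -/
def SolvesDE {n : ℕ} (I : Set ℝ) (a : ℝ → Fin n → ℝ) (y : ℝ → ℝ) : Prop :=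
  (∀ k < n, DifferentiableOn ℝ (iteratedDerivWithin k y I) I) ∧
    ∀ x ∈ I, iteratedDerivWithin n y I x =
      ∑ i : Fin n, a x i * iteratedDerivWithin (n - 1 - (i : ℕ)) y I x

/-- `f : I → ℝ^n` is a fundamental system of solutions of
`y^{(n)} = a_1 y^{(n-1)} + ⋯ + a_n y`: each component solves the equation and the
components are linearly independent functions on `I`. -/
def FundSystem {n : ℕ} (I : Set ℝ) (a : ℝ → Fin n → ℝ) (f : ℝ → Fin n → ℝ) : Prop :=
  (∀ p : Fin n, SolvesDE I a fun t => f t p) ∧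
    LinearIndependent ℝ fun p : Fin n => I.restrict fun t => f t p


section Aux
open Finset


lemma itD_sum {s : Set ℝ} (hs : UniqueDiffOn ℝ s) {x : ℝ} (hx : x ∈ s)
    {ι : Type*} (u : Finset ι) (F : ι → ℝ → ℝ) (k : ℕ)
    (hF : ∀ i ∈ u, ContDiffOn ℝ k (F i) s) :
    iteratedDerivWithin k (fun t => ∑ i ∈ u, F i t) s x
      = ∑ i ∈ u, iteratedDerivWithin k (F i) s x := by
  induction u using Finset.cons_induction with
  | empty => cases k with
    | zero => simp
    | succ k =>
      simp only [Finset.sum_empty]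
      rw [iteratedDerivWithin_succ']
      have : Set.EqOn (derivWithin (fun _ : ℝ => (0:ℝ)) s) (fun _ => (0:ℝ)) s := by
        intro y hy; simpa using derivWithin_const y s (0:ℝ) (hs y hy)
      rw [iteratedDerivWithin_congr this hx]
      clear this hF
      induction k with
      | zero => simp
      | succ k IH =>
        rw [iteratedDerivWithin_succ']
        rw [iteratedDerivWithin_congr
          (fun y hy => by simpa using derivWithin_const y s (0:ℝ) (hs y hy) : Set.EqOn (derivWithin (fun _ : ℝ => (0:ℝ)) s) (fun _ => (0:ℝ)) s) hx]
        exact IH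
  | cons a u ha IH =>
    simp only [Finset.sum_cons]
    rw [show (fun t => F a t + ∑ i ∈ u, F i t)
        = (F a) + (fun t => ∑ i ∈ u, F i t) from rfl,
      iteratedDerivWithin_add hx hs ((hF a (Finset.mem_cons_self a u)).contDiffWithinAt hx)
        ((ContDiffOn.sum fun i hi => hF i (Finset.mem_cons_of_mem hi)).contDiffWithinAt hx),
      IH (fun i hi => hF i (Finset.mem_cons_of_mem hi))]

lemma itD_comp {s : Set ℝ} (hs : UniqueDiffOn ℝ s) (f : ℝ → ℝ) (j k : ℕ) :
    ∀ x ∈ s, iteratedDerivWithin k (iteratedDerivWithin j f s) s x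
      = iteratedDerivWithin (j + k) f s x := by
  induction k with
  | zero => intro x hx; simp
  | succ k IH =>
    intro x hx
    rw [iteratedDerivWithin_succ, ← Nat.add_assoc,
      iteratedDerivWithin_succ]
    exact derivWithin_congr (fun y hy => IH y hy) (IH x hx)



lemma leibniz_key (k : ℕ) (F G : ℕ → ℝ) :
    ∑ j ∈ range (k+2), ((k+1).choose j : ℝ) * (F j * G (k+1-j))
      = ∑ j ∈ range (k+1), (k.choose j : ℝ) * (F (j+1) * G (k-j))
        + ∑ j ∈ range (k+1), (k.choose j : ℝ) * (F j * G (k+1-j)) := by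
  rw [Finset.sum_range_succ' _ (k+1)]
  have h1 : ∀ j ∈ range (k+1), ((k+1).choose (j+1) : ℝ) * (F (j+1) * G (k+1-(j+1)))
      = (k.choose j : ℝ) * (F (j+1) * G (k-j)) + (k.choose (j+1) : ℝ) * (F (j+1) * G (k-j)) := by
    intro j hjj
    have : (k+1).choose (j+1) = k.choose j + k.choose (j+1) := Nat.choose_succ_succ k j
    rw [this]
    push_cast
    ring_nf
  rw [Finset.sum_congr rfl h1, Finset.sum_add_distrib]
  have h2 : ∑ j ∈ range (k+1), (k.choose (j+1) : ℝ) * (F (j+1) * G (k-j))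
        + ((k+1).choose 0 : ℝ) * (F 0 * G (k+1-0))
      = ∑ j ∈ range (k+1), (k.choose j : ℝ) * (F j * G (k+1-j)) := by
    have h3 : ∑ j ∈ range (k+2), (k.choose j : ℝ) * (F j * G (k+1-j))
        = ∑ j ∈ range (k+1), (k.choose (j+1) : ℝ) * (F (j+1) * G (k+1-(j+1)))
          + (k.choose 0 : ℝ) * (F 0 * G (k+1-0)) := Finset.sum_range_succ' _ (k+1)
    rw [Finset.sum_range_succ _ (k+1)] at h3
    simp only [Nat.choose_self, Nat.choose_zero_right, Nat.choose_succ_self, Nat.cast_zero,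
      Nat.cast_one, Nat.cast_ofNat] at h3 ⊢
    have hk : ∀ j, k + 1 - (j+1) = k - j := fun j => by omega
    simp only [hk] at h3
    simp only [Nat.choose_succ_self, Nat.cast_zero, zero_mul, add_zero] at h3
    linarith [h3]
  linarith [h2]

lemma itD_mul {s : Set ℝ} (ho : IsOpen s) {f g : ℝ → ℝ} {K : ℕ}
    (hf : ContDiffOn ℝ K f s) (hg : ContDiffOn ℝ K g s) :
    ∀ k ≤ K, ∀ x ∈ s, iteratedDerivWithin k (fun t => f t * g t) s x
      = ∑ j ∈ Finset.range (k+1), (k.choose j : ℝ) *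
          (iteratedDerivWithin j f s x * iteratedDerivWithin (k-j) g s x) := by
  have hs : UniqueDiffOn ℝ s := ho.uniqueDiffOn
  intro k
  induction k with
  | zero => intro _ x hx; simp
  | succ k IH =>
    intro hk x hx
    have hk' : k ≤ K := by omega
    rw [iteratedDerivWithin_succ]
    rw [derivWithin_congr (fun y hy => IH hk' y hy) (IH hk' x hx)]
    have hder : ∀ j, j < K → HasDerivWithinAt (iteratedDerivWithin j f s)
        (iteratedDerivWithin (j+1) f s x) s x ∧ HasDerivWithinAt (iteratedDerivWithin j g s)
        (iteratedDerivWithin (j+1) g s x) s x := by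
      intro j hjj
      have hjK : j < K ∨ True := Or.inr trivial
      constructor
      · have h1 := ((hf.differentiableOn_iteratedDerivWithin
          (show (j:WithTop ℕ∞) < K by exact_mod_cast hjj) hs) x hx).hasDerivWithinAt
        rwa [show derivWithin (iteratedDerivWithin j f s) s x
          = iteratedDerivWithin (j+1) f s x from
          (congrFun iteratedDerivWithin_succ x).symm] at h1
      · have h1 := ((hg.differentiableOn_iteratedDerivWithin
          (show (j:WithTop ℕ∞) < K by exact_mod_cast hjj) hs) x hx).hasDerivWithinAt
        rwa [show derivWithin (iteratedDerivWithin j g s) s x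
          = iteratedDerivWithin (j+1) g s x from
          (congrFun iteratedDerivWithin_succ x).symm] at h1
    have H : HasDerivWithinAt
        (fun y => ∑ j ∈ Finset.range (k+1), (k.choose j : ℝ) *
          (iteratedDerivWithin j f s y * iteratedDerivWithin (k-j) g s y))
        (∑ j ∈ Finset.range (k+1), (k.choose j : ℝ) *
          (iteratedDerivWithin (j+1) f s x * iteratedDerivWithin (k-j) g s x
            + iteratedDerivWithin j f s x * iteratedDerivWithin (k-j+1) g s x)) s x := by
      apply HasDerivWithinAt.fun_sum
      intro j hj
      have hj' : j < K := by simp only [Finset.mem_range] at hj; omega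
      have hkj : k - j < K := by omega
      exact ((hder j hj').1.mul (hder (k-j) hkj).2).const_mul _
    rw [H.derivWithin (hs x hx),
      leibniz_key k (fun j => iteratedDerivWithin j f s x) (fun j => iteratedDerivWithin j g s x)]
    rw [← Finset.sum_add_distrib]
    apply Finset.sum_congr rfl
    intro j hj
    simp only [Finset.mem_range] at hj
    have : k - j + 1 = k + 1 - j := by omega
    rw [this]
    ring


lemma contDiffOn_itD {s : Set ℝ} (hs : UniqueDiffOn ℝ s) :
    ∀ (k : ℕ) (f : ℝ → ℝ) (r : ℕ), ContDiffOn ℝ (k + r : ℕ) f s →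
      ContDiffOn ℝ r (iteratedDerivWithin k f s) s := by
  intro k
  induction k with
  | zero => intro f r h; simpa [iteratedDerivWithin_zero] using h
  | succ k IH =>
    intro f r h
    have h' : ContDiffOn ℝ ((k + r : ℕ) + 1) f s := by
      have : ((k + 1 + r : ℕ) : WithTop ℕ∞) = ((k + r : ℕ) : WithTop ℕ∞) + 1 := by
        push_cast; ring
      rwa [this] at h
    have hd : ContDiffOn ℝ (k + r : ℕ) (derivWithin f s) s :=
      ((contDiffOn_succ_iff_derivWithin hs).1 h').2.2
    have := IH (derivWithin f s) r hd
    exact this.congr fun y hy => congrFun (iteratedDerivWithin_succ' (f := f) (n := k)) y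


lemma solution_smooth {n m : ℕ} (hn : 0 < n) {I : Set ℝ} (hIo : IsOpen I)
    {a : ℝ → Fin n → ℝ} (ha : ∀ i : Fin n, ContDiffOn ℝ ((m - 1 : ℕ) : ℕ∞) (fun t => a t i) I)
    {y : ℝ → ℝ} (hy : SolvesDE I a y) :
    ∀ r ≤ m - 1, ContDiffOn ℝ ((n + r : ℕ)) y I := by
  have hs : UniqueDiffOn ℝ I := hIo.uniqueDiffOn
  set g : ℝ → ℝ := fun x => ∑ i : Fin n, a x i * iteratedDerivWithin (n - 1 - (i : ℕ)) y I x
    with hg_def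
  have hEq : Set.EqOn (iteratedDerivWithin n y I) g I := fun x hx => hy.2 x hx
  intro r
  induction r with
  | zero =>
    intro _
    rw [contDiffOn_nat_iff_continuousOn_differentiableOn_deriv hs]
    constructor
    · intro k hk
      rcases Nat.lt_or_ge k n with hkn | hkn
      · exact (hy.1 k hkn).continuousOn
      · have hkn' : k = n := by omega
        subst hkn'
        have hgc : ContinuousOn g I := by
          apply continuousOn_finset_sum
          intro i _
          exact ((ha i).continuousOn).mul ((hy.1 _ (by omega)).continuousOn)
        simpa using hgc.congr hEq
    · intro k hk
      exact hy.1 k (by exact_mod_cast hk)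
  | succ r IH =>
    intro hr
    have Hr : ContDiffOn ℝ ((n + r : ℕ)) y I := IH (by omega)
    have hgsm : ContDiffOn ℝ ((r + 1 : ℕ)) g I := by
      apply ContDiffOn.sum
      intro i _
      apply ContDiffOn.mul
      · exact (ha i).of_le (by exact_mod_cast (by omega : r + 1 ≤ m - 1))
      · have h1 : ContDiffOn ℝ (((n - 1 - (i : ℕ)) + (r + 1) : ℕ)) y I :=
          Hr.of_le (by exact_mod_cast (by omega : (n - 1 - (i : ℕ)) + (r + 1) ≤ n + r))
        exact contDiffOn_itD hs _ y (r + 1) h1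
    have hcomp : ∀ s' : ℕ, Set.EqOn (iteratedDerivWithin (n + s') y I)
        (iteratedDerivWithin s' g I) I := by
      intro s' x hx
      rw [← itD_comp hs y n s' x hx]
      exact iteratedDerivWithin_congr hEq hx
    rw [contDiffOn_nat_iff_continuousOn_differentiableOn_deriv hs]
    constructor
    · intro k hk
      rcases Nat.lt_or_ge k (n + r + 1) with hkn | hkn
      · exact Hr.continuousOn_iteratedDerivWithin (by exact_mod_cast (by omega : k ≤ n + r)) hs
      · have hkn' : k = n + (r + 1) := by omega
        subst hkn'
        exact (hgsm.continuousOn_iteratedDerivWithin (le_refl _) hs).congr (hcomp (r + 1))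
    · intro k hk
      have hk' : k ≤ n + r := by exact_mod_cast Nat.lt_succ_iff.mp (by exact_mod_cast hk)
      rcases Nat.lt_or_ge k (n + r) with hkn | hkn
      · exact Hr.differentiableOn_iteratedDerivWithin (by exact_mod_cast hkn) hs
      · have hkn' : k = n + r := by omega
        subst hkn'
        exact ((hgsm.differentiableOn_iteratedDerivWithin
          (by exact_mod_cast Nat.lt_succ_self r) hs)).congr (hcomp r)


def rotP (n : ℕ) : ℕ → Equiv.Perm (Fin n)
  | 0 => 1
  | r + 1 => (if h : r + 1 < n then Equiv.swap ⟨r, by omega⟩ ⟨r + 1, h⟩ else (1 : Equiv.Perm (Fin n))) * rotP n r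

lemma rotP_apply (n : ℕ) : ∀ r, ∀ hr : r < n, ∀ q : Fin n,
    (rotP n r) q = if (q : ℕ) = 0 then ⟨r, hr⟩
      else if (q : ℕ) ≤ r then ⟨(q : ℕ) - 1, by omega⟩ else q := by
  intro r
  induction r with
  | zero =>
    intro hr q
    by_cases h : (q : ℕ) = 0
    · simp [rotP, h, Fin.ext_iff]
    · simp [rotP, h, Fin.ext_iff] <;> omega
  | succ r IH =>
    intro hr q
    have hr' : r < n := by omega
    rw [rotP]
    rw [dif_pos hr]
    simp only [Equiv.Perm.mul_apply]
    rw [IH hr' q]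
    by_cases h0 : (q : ℕ) = 0
    · rw [if_pos h0, if_pos h0]
      exact Equiv.swap_apply_left _ _
    · rw [if_neg h0, if_neg h0]
      by_cases h1 : (q : ℕ) ≤ r
      · rw [if_pos h1, if_pos (by omega)]
        apply Equiv.swap_apply_of_ne_of_ne
        · simp [Fin.ext_iff]; omega
        · simp [Fin.ext_iff]; omega
      · rw [if_neg h1]
        by_cases h2 : (q : ℕ) ≤ r + 1
        · have : (q : ℕ) = r + 1 := by omega
          rw [if_pos h2]
          have hq : q = (⟨r + 1, hr⟩ : Fin n) := by simp [Fin.ext_iff]; omega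
          rw [hq, Equiv.swap_apply_right]
          simp [Fin.ext_iff] <;> omega
        · rw [if_neg h2]
          apply Equiv.swap_apply_of_ne_of_ne
          · simp [Fin.ext_iff]; omega
          · simp [Fin.ext_iff]; omega

lemma rotP_sign (n : ℕ) : ∀ r, r < n → Equiv.Perm.sign (rotP n r) = (-1) ^ r := by
  intro r
  induction r with
  | zero => intro _; simp [rotP]
  | succ r IH =>
    intro hr
    rw [rotP, dif_pos hr, _root_.map_mul, IH (by omega), Equiv.Perm.sign_swap (by simp [Fin.ext_iff])]
    rw [pow_succ]
    exact mul_comm _ _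


lemma matD_apply {n : ℕ} (I : Set ℝ) (X : ℝ → Matrix (Fin n) (Fin n) ℝ) (k : ℕ) (x : ℝ)
    (p q : Fin n) : matD I X k x p q = iteratedDerivWithin k (fun t => X t p q) I x := rfl

lemma BellD_succ {n : ℕ} (I : Set ℝ) (X : ℝ → Matrix (Fin n) (Fin n) ℝ) (k : ℕ) (x : ℝ) :
    BellD I X (k + 1) x = ∑ j : Fin (k + 1), ((Nat.choose k (j : ℕ) : ℝ)) •
      (BellD I X (j : ℕ) x * matD I X (k - (j : ℕ)) x) := by
  show Bell (k + 1) _ = _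
  rw [Bell]
  exact Finset.sum_congr rfl fun j _ => by rfl

lemma matD_Y {n m : ℕ} (hn : 0 < n) {I : Set ℝ} (hIo : IsOpen I)
    {a f : ℝ → Fin n → ℝ}
    (ha : ∀ i : Fin n, ContDiffOn ℝ ((m - 1 : ℕ) : ℕ∞) (fun t => a t i) I)
    (hf : FundSystem I a f) :
    ∀ k ≤ m, ∀ x ∈ I, matD I (Yfun I f) k x = Yfun I f x * BellD I (colMat a) k x := by
  have hs : UniqueDiffOn ℝ I := hIo.uniqueDiffOn
  have hfsm : ∀ p : Fin n, ContDiffOn ℝ ((n + (m - 1) : ℕ)) (fun t => f t p) I :=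
    fun p => solution_smooth hn hIo ha (hf.1 p) (m - 1) le_rfl
  have hYsm : ∀ p q : Fin n, ContDiffOn ℝ ((m - 1 : ℕ)) (fun t => Yfun I f t p q) I := by
    intro p q
    have h1 : ContDiffOn ℝ (((n - 1 - (q : ℕ)) + (m - 1) : ℕ)) (fun t => f t p) I :=
      (hfsm p).of_le (by exact_mod_cast (by omega : (n - 1 - (q : ℕ)) + (m - 1) ≤ n + (m - 1)))
    exact contDiffOn_itD hs _ _ _ h1
  have hXsm : ∀ p q : Fin n, ContDiffOn ℝ ((m - 1 : ℕ)) (fun t => colMat a t p q) I := by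
    intro p q
    by_cases h : (q : ℕ) = 0
    · have he : (fun t => colMat a t p q) = fun t => a t p := by
        funext t; simp [colMat, h]
      rw [he]; exact ha p
    · have he : (fun t => colMat a t p q)
          = fun _ => (if (p : ℕ) + 1 = (q : ℕ) then (1 : ℝ) else 0) := by
        funext t; simp [colMat, h]
      rw [he]; exact contDiffOn_const
  have hstep : ∀ p q : Fin n, ∀ t ∈ I,
      derivWithin (fun u => Yfun I f u p q) I t
        = ∑ l : Fin n, Yfun I f t p l * colMat a t l q := by
    intro p q t ht
    have h1 : derivWithin (fun u => Yfun I f u p q) I t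
        = iteratedDerivWithin ((n - 1 - (q : ℕ)) + 1) (fun u => f u p) I t :=
      (congrFun iteratedDerivWithin_succ t).symm
    rw [h1]
    by_cases h : (q : ℕ) = 0
    · have h2 : (n - 1 - (q : ℕ)) + 1 = n := by omega
      rw [h2, (hf.1 p).2 t ht]
      apply Finset.sum_congr rfl
      intro l _
      simp only [Yfun, colMat, Matrix.of_apply, h, if_pos]
      ring
    · have h2 : (n - 1 - (q : ℕ)) + 1 = n - 1 - ((q : ℕ) - 1) := by omega
      rw [h2, Finset.sum_eq_single (⟨(q : ℕ) - 1, by omega⟩ : Fin n)]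
      · simp only [Yfun, colMat, Matrix.of_apply, if_neg h, Fin.val_mk]
        rw [if_pos (by omega)]
        simp
      · intro l _ hl
        simp only [Yfun, colMat, Matrix.of_apply, if_neg h]
        rw [if_neg (by simp [Fin.ext_iff] at hl ⊢; omega)]
        simp
      · intro habs
        exact absurd (Finset.mem_univ _) habs
  intro k
  induction k using Nat.strong_induction_on with
  | _ k IH =>
    intro hk x hx
    match k, IH, hk with
    | 0, _, _ =>
      have hB : BellD I (colMat a) 0 x = 1 := by
        show Bell 0 _ = 1
        rw [Bell]
      rw [hB, Matrix.mul_one]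
      ext p q
      rw [matD_apply]
      rw [iteratedDerivWithin_zero]
    | (k+1), IH, hk =>
      have hk1 : k ≤ m - 1 := by omega
      have key : matD I (Yfun I f) (k + 1) x
          = ∑ j ∈ Finset.range (k + 1), (k.choose j : ℝ) •
            (matD I (Yfun I f) j x * matD I (colMat a) (k - j) x) := by
        ext p q
        rw [matD_apply, iteratedDerivWithin_succ',
          iteratedDerivWithin_congr (fun t ht => hstep p q t ht) hx,
          itD_sum hs hx Finset.univ _ k (fun l _ =>
            (((hYsm p l).of_le (by exact_mod_cast hk1)).mul
              ((hXsm l q).of_le (by exact_mod_cast hk1))))]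
      
        have e4 : ∀ l : Fin n, iteratedDerivWithin k (fun t => Yfun I f t p l * colMat a t l q) I x
            = ∑ j ∈ Finset.range (k + 1), (k.choose j : ℝ) *
              (iteratedDerivWithin j (fun t => Yfun I f t p l) I x *
                iteratedDerivWithin (k - j) (fun t => colMat a t l q) I x) :=
          fun l => itD_mul hIo (hYsm p l) (hXsm l q) k hk1 x hx
        rw [Finset.sum_congr rfl (fun l _ => e4 l), Finset.sum_comm]
        rw [Matrix.sum_apply]
        apply Finset.sum_congr rfl
        intro j _
        rw [Matrix.smul_apply, Matrix.mul_apply, smul_eq_mul, Finset.mul_sum]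
        apply Finset.sum_congr rfl
        intro l _
        rw [matD_apply, matD_apply]
      rw [key, BellD_succ]
      rw [Fin.sum_univ_eq_sum_range
        (fun j => ((Nat.choose k j : ℝ)) • (BellD I (colMat a) j x * matD I (colMat a) (k - j) x))
        (k + 1)]
      rw [Finset.mul_sum]
      apply Finset.sum_congr rfl
      intro j hj
      have hjk : j < k + 1 := Finset.mem_range.mp hj
      rw [IH j hjk (by omega) x hx, Matrix.mul_smul, Matrix.mul_assoc]

end Aux

/-- for a fundamental system `f`, for `0 ≤ d ≤ m-1` and `0 ≤ j ≤ n-1`,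
`W_f^{(n+d,n-1,…,j+1,j-1,…,0)} = (-1)^{n-j-1} W_f ⟨B_{d+1}(X_a,…,X_a^{(d)}) e_1, e_{n-j}⟩`
on `I`. -/
theorem stmt_6 (n m : ℕ) (hn : 0 < n) (hm : 0 < m) (I : Set ℝ) (hIo : IsOpen I)
    (hIne : I.Nonempty) (hIc : I.OrdConnected) (a f : ℝ → Fin n → ℝ)
    (ha : ∀ i : Fin n, ContDiffOn ℝ ((m - 1 : ℕ) : ℕ∞) (fun t => a t i) I)
    (hf : FundSystem I a f) :
    ∀ d < m, ∀ j < n, ∀ x ∈ I,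
      genW I f (dIdx n d j) x =
        (-1 : ℝ) ^ (n - j - 1) * genW I f (wIdx n) x *
          ((BellD I (colMat a) (d + 1) x).mulVec (stdB n 1) ⬝ᵥ stdB n (n - j)) := by
  intro d hd j hj x hx
  haveI : NeZero n := ⟨hn.ne'⟩
  have hs : UniqueDiffOn ℝ I := hIo.uniqueDiffOn
  set Y := Yfun I f x with hY
  set B := BellD I (colMat a) (d + 1) x with hB
  have hmain : matD I (Yfun I f) (d + 1) x = Y * B :=
    matD_Y hn hIo ha hf (d + 1) (by omega) x hx
  set r := n - 1 - j with hrdef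
  have hrn : r < n := by omega
  set σ := rotP n r with hσ
  have hσ0 : σ 0 = ⟨r, hrn⟩ := by
    rw [hσ, rotP_apply n r hrn]
    simp
  -- RHS inner product
  have hRHS : (B.mulVec (stdB n 1)) ⬝ᵥ stdB n (n - j) = B ⟨r, hrn⟩ 0 := by
    have h1 : ∀ i, B.mulVec (stdB n 1) i = B i 0 := by
      intro i
      show ∑ q, B i q * stdB n 1 q = B i 0
      rw [Finset.sum_eq_single (0 : Fin n)]
      · simp [stdB]
      · intro l _ hl
        have : ¬ ((l : ℕ) + 1 = 1) := by
          intro h; exact hl (Fin.ext (by simpa using (by omega : (l:ℕ) = 0)))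
        simp [stdB, this, hl]
      · simp
    show ∑ i, B.mulVec (stdB n 1) i * stdB n (n - j) i = _
    rw [Finset.sum_congr rfl (fun i _ => by rw [h1 i])]
    rw [Finset.sum_eq_single (⟨r, hrn⟩ : Fin n)]
    · have : ((⟨r, hrn⟩ : Fin n) : ℕ) + 1 = n - j := by simp; omega
      simp [stdB, this]
    · intro l _ hl
      have : ¬ ((l : ℕ) + 1 = n - j) := by
        simp [Fin.ext_iff] at hl; omega
      simp [stdB, this]
    · simp
  -- the column decomposition
  set C := Y.submatrix id σ with hC
  set c : Fin n → ℝ := fun i => B (σ i) 0 with hc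
  have hM : (Matrix.of fun p q => iteratedDerivWithin (dIdx n d j (q : Fin n)) (fun t => f t p) I x)
      = C.updateCol 0 (fun p => ∑ i, c i • C p i) := by
    ext p q
    rw [Matrix.updateCol_apply]
    by_cases h0 : q = 0
    · rw [if_pos h0, h0]
      have e1 : ∑ i, c i • C p i = ∑ i, Y p i * B i 0 := by
        rw [← Equiv.sum_comp σ (fun i => Y p i * B i 0)]
        apply Finset.sum_congr rfl
        intro i _
        rw [hc, hC]
        simp [mul_comm]
      rw [e1]
      have e2 : ∑ i, Y p i * B i 0 = (Y * B) p 0 := (Matrix.mul_apply).symm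
      rw [e2, ← hmain]
      have e3 : matD I (Yfun I f) (d + 1) x p 0
          = iteratedDerivWithin (d + 1)
            (iteratedDerivWithin (n - 1 - ((0 : Fin n) : ℕ)) (fun t => f t p) I) I x := rfl
      rw [e3, itD_comp hs _ _ _ x hx]
      have e4 : dIdx n d j ((0 : Fin n)) = (n - 1 - ((0 : Fin n) : ℕ)) + (d + 1) := by
        simp [dIdx]; omega
      rw [Matrix.of_apply, e4]
    · rw [if_neg h0]
      rw [hC]
      have hq0 : (q : ℕ) ≠ 0 := by
        intro h; exact h0 (Fin.ext (by simpa using h))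
      have e5 : dIdx n d j q = n - 1 - ((σ q : Fin n) : ℕ) := by
        rw [hσ, rotP_apply n r hrn q, if_neg hq0]
        by_cases h1 : (q : ℕ) ≤ r
        · rw [if_pos h1]
          simp only [dIdx, if_neg hq0, Fin.val_mk]
          have : j < n - (q : ℕ) := by omega
          rw [if_pos this]
          omega
        · rw [if_neg h1]
          simp only [dIdx, if_neg hq0]
          have : ¬ (j < n - (q : ℕ)) := by omega
          rw [if_neg this]
          have hqn : (q : ℕ) < n := q.isLt
          omega
      rw [Matrix.of_apply, e5]
      rfl
  show Matrix.det _ = _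
  rw [hM, Matrix.det_updateCol_sum C 0 c]
  have hdetC : C.det = ((Equiv.Perm.sign σ : ℤ) : ℝ) * Y.det := Matrix.det_permute' σ Y
  have hsign : ((Equiv.Perm.sign σ : ℤ) : ℝ) = (-1 : ℝ) ^ r := by
    rw [hσ, rotP_sign n r hrn]
    push_cast
    simp
  have hdetY : Y.det = genW I f (wIdx n) x := rfl
  rw [hdetC, hsign, hdetY, hRHS]
  have hc0 : c 0 = B ⟨r, hrn⟩ 0 := by
    show B (σ 0) 0 = _
    rw [hσ0]
  rw [hc0]
  have hnj : n - j - 1 = r := by omega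
  rw [hnj]
  simp only [smul_eq_mul]
  ring
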